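/- Let x = (y₁, y₂, y₃, v₁, v₂, v₃) ∈ ℝ⁶ satisfy F(x) = 0 with all six coordinates positive, and assume R₁ ≠ R₂ and R₁ ≠ R₃. Then: (i) 1 − y₁ − y₂ − y₃ = 1/R₁; (ii) v₁ = (p₁/c)·y₁; (iii) y₂ = (p₂/q₂)·(R₂/(R₁−R₂))·y₁; (iv) y₃ = (p₂q₃/(q₂r₃))·(R₂R₃/((R₁−R₂)(R₁−R₃)))·y₁; (v) v₂ = (R₁/R₂)·(q₂/c)·y₂; (vi) v₃ = (R₁/R₃)·(r₃/c)·y₃. -/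

import Mathlib

/-- The HBV three-strain vector field `F(y₁,y₂,y₃,v₁,v₂,v₃)`, with `β = 1 − y₁ − y₂ − y₃`. -/
noncomputable def Fhbv (α₁ α₂ α₃ δ₁ δ₂ δ₃ c p₁ p₂ q₂ q₃ r₃ : ℝ) (x : Fin 6 → ℝ) :
    Fin 6 → ℝ :=
  ![α₁ * (1 - x 0 - x 1 - x 2) * x 3 - δ₁ * x 0,
    α₂ * (1 - x 0 - x 1 - x 2) * x 4 - δ₂ * x 1,
    α₃ * (1 - x 0 - x 1 - x 2) * x 5 - δ₃ * x 2,
    p₁ * x 0 - c * x 3,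
    p₂ * x 0 + q₂ * x 1 - c * x 4,
    q₃ * x 1 + r₃ * x 2 - c * x 5]

/-- if x = (y₁,…,v₃) is a coordinatewise-positive zero of F and R₁ ≠ R₂,
R₁ ≠ R₃, then the six stated identities hold. -/
theorem stmt_9 (α₁ α₂ α₃ δ₁ δ₂ δ₃ c p₁ p₂ q₂ q₃ r₃ : ℝ)
    (hα₁ : 0 < α₁) (hα₂ : 0 < α₂) (hα₃ : 0 < α₃)
    (hδ₁ : 0 < δ₁) (hδ₂ : 0 < δ₂) (hδ₃ : 0 < δ₃) (hc : 0 < c)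
    (hp₁ : 0 < p₁) (hp₂ : 0 < p₂) (hq₂ : 0 < q₂) (hq₃ : 0 < q₃) (hr₃ : 0 < r₃)
    (x : Fin 6 → ℝ) (hx : ∀ i, 0 < x i)
    (hF : Fhbv α₁ α₂ α₃ δ₁ δ₂ δ₃ c p₁ p₂ q₂ q₃ r₃ x = 0)
    (h12 : α₁ * p₁ / (c * δ₁) ≠ α₂ * q₂ / (c * δ₂))
    (h13 : α₁ * p₁ / (c * δ₁) ≠ α₃ * r₃ / (c * δ₃)) :
    let R₁ : ℝ := α₁ * p₁ / (c * δ₁)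
    let R₂ : ℝ := α₂ * q₂ / (c * δ₂)
    let R₃ : ℝ := α₃ * r₃ / (c * δ₃)
    1 - x 0 - x 1 - x 2 = 1 / R₁ ∧
      x 3 = (p₁ / c) * x 0 ∧
      x 1 = (p₂ / q₂) * (R₂ / (R₁ - R₂)) * x 0 ∧
      x 2 = (p₂ * q₃ / (q₂ * r₃)) * (R₂ * R₃ / ((R₁ - R₂) * (R₁ - R₃))) * x 0 ∧
      x 4 = (R₁ / R₂) * (q₂ / c) * x 1 ∧
      x 5 = (R₁ / R₃) * (r₃ / c) * x 2 := by
  intro R₁ R₂ R₃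
  have e0 := congrFun hF 0
  have e1 := congrFun hF 1
  have e2 := congrFun hF 2
  have e3 := congrFun hF 3
  have e4 := congrFun hF 4
  have e5 := congrFun hF 5
  norm_num [Fhbv, Matrix.cons_val_succ] at e0
  norm_num [Fhbv, Matrix.cons_val_succ] at e1
  norm_num [Fhbv, Matrix.cons_val_succ] at e2
  norm_num [Fhbv, Matrix.cons_val_succ] at e3
  norm_num [Fhbv, Matrix.cons_val_succ] at e4
  simp [Fhbv, show (5:Fin 6) = (4:Fin 5).succ from rfl, Matrix.cons_val_succ] at e5
  simp only [Matrix.cons_val] at e2 e3 e4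
  have hc' := hc.ne'
  have hδ₁' := hδ₁.ne'
  have hδ₂' := hδ₂.ne'
  have hδ₃' := hδ₃.ne'
  have hα₁' := hα₁.ne'
  have hα₂' := hα₂.ne'
  have hα₃' := hα₃.ne'
  have hp₁' := hp₁.ne'
  have hp₂' := hp₂.ne'
  have hq₂' := hq₂.ne'
  have hq₃' := hq₃.ne'
  have hr₃' := hr₃.ne'
  have hx0 := (hx 0).ne'
  have h12' : R₁ - R₂ ≠ 0 := sub_ne_zero.mpr h12
  have h13' : R₁ - R₃ ≠ 0 := sub_ne_zero.mpr h13
  have key : ((1 - x 0 - x 1 - x 2) * (α₁ * p₁) - c * δ₁) * x 0 = 0 := by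
    linear_combination c * e0 + α₁ * (1 - x 0 - x 1 - x 2) * e3
  have hB : (1 - x 0 - x 1 - x 2) * (α₁ * p₁) = c * δ₁ := by
    rcases mul_eq_zero.mp key with h | h
    · linarith
    · exact absurd h hx0
  have g1 : 1 - x 0 - x 1 - x 2 = 1 / R₁ := by
    simp only [R₁]
    field_simp
    linarith [hB]
  have g2 : x 3 = (p₁ / c) * x 0 := by
    field_simp
    linarith [e3]
  have P2 : α₂ * δ₁ * (p₂ * x 0 + q₂ * x 1) = α₁ * p₁ * δ₂ * x 1 := by
    have h' : α₂ * ((1 - x 0 - x 1 - x 2) * (α₁ * p₁)) * (p₂ * x 0 + q₂ * x 1)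
        = α₁ * p₁ * (c * δ₂) * x 1 := by
      linear_combination α₁ * p₁ * c * e1 + α₁ * p₁ * α₂ * (1 - x 0 - x 1 - x 2) * e4
    rw [hB] at h'
    exact mul_left_cancel₀ hc' (by linear_combination h' :
      c * (α₂ * δ₁ * (p₂ * x 0 + q₂ * x 1)) = c * (α₁ * p₁ * δ₂ * x 1))
  have P3 : α₃ * δ₁ * (q₃ * x 1 + r₃ * x 2) = α₁ * p₁ * δ₃ * x 2 := by
    have h' : α₃ * ((1 - x 0 - x 1 - x 2) * (α₁ * p₁)) * (q₃ * x 1 + r₃ * x 2)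
        = α₁ * p₁ * (c * δ₃) * x 2 := by
      linear_combination α₁ * p₁ * c * e2 + α₁ * p₁ * α₃ * (1 - x 0 - x 1 - x 2) * e5
    rw [hB] at h'
    exact mul_left_cancel₀ hc' (by linear_combination h' :
      c * (α₃ * δ₁ * (q₃ * x 1 + r₃ * x 2)) = c * (α₁ * p₁ * δ₃ * x 2))
  have hRsub2 : R₁ - R₂ = (α₁ * p₁ * δ₂ - α₂ * q₂ * δ₁) / (c * δ₁ * δ₂) := by
    simp only [R₁, R₂]
    field_simp
  have hRsub3 : R₁ - R₃ = (α₁ * p₁ * δ₃ - α₃ * r₃ * δ₁) / (c * δ₁ * δ₃) := by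
    simp only [R₁, R₃]
    field_simp
  have hD₂ : α₁ * p₁ * δ₂ - α₂ * q₂ * δ₁ ≠ 0 := by
    intro h
    exact h12' (by rw [hRsub2, h, zero_div])
  have hD₃ : α₁ * p₁ * δ₃ - α₃ * r₃ * δ₁ ≠ 0 := by
    intro h
    exact h13' (by rw [hRsub3, h, zero_div])
  have hx1 : x 1 = α₂ * δ₁ * p₂ * x 0 / (α₁ * p₁ * δ₂ - α₂ * q₂ * δ₁) := by
    rw [eq_div_iff hD₂]
    linear_combination -P2
  have hx2 : x 2 = α₃ * δ₁ * q₃ * x 1 / (α₁ * p₁ * δ₃ - α₃ * r₃ * δ₁) := by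
    rw [eq_div_iff hD₃]
    linear_combination -P3
  have g3 : x 1 = (p₂ / q₂) * (R₂ / (R₁ - R₂)) * x 0 := by
    rw [hx1, hRsub2]
    simp only [R₂]
    field_simp
  have g4 : x 2 = (p₂ * q₃ / (q₂ * r₃)) * (R₂ * R₃ / ((R₁ - R₂) * (R₁ - R₃))) * x 0 := by
    rw [hx2, hx1, hRsub2, hRsub3]
    simp only [R₂, R₃]
    field_simp
  have g5 : x 4 = (R₁ / R₂) * (q₂ / c) * x 1 := by
    have hx4 : x 4 = (p₂ * x 0 + q₂ * x 1) / c := by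
      rw [eq_div_iff hc']
      linear_combination -e4
    rw [hx4, hx1]
    simp only [R₁, R₂]
    field_simp
    have hDa : α₁ * p₁ * δ₂ - q₂ * α₂ * δ₁ ≠ 0 := by
      rw [show α₁ * p₁ * δ₂ - q₂ * α₂ * δ₁ = α₁ * p₁ * δ₂ - α₂ * q₂ * δ₁ by ring]; exact hD₂
    field_simp
    ring
  have g6 : x 5 = (R₁ / R₃) * (r₃ / c) * x 2 := by
    have hx5 : x 5 = (q₃ * x 1 + r₃ * x 2) / c := by
      rw [eq_div_iff hc']
      linear_combination -e5
    rw [hx5, hx2, hx1]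
    simp only [R₁, R₃]
    field_simp
    have hDa : α₁ * p₁ * δ₂ - α₂ * δ₁ * q₂ ≠ 0 := by
      rw [show α₁ * p₁ * δ₂ - α₂ * δ₁ * q₂ = α₁ * p₁ * δ₂ - α₂ * q₂ * δ₁ by ring]; exact hD₂
    have hDb : α₁ * p₁ * δ₃ - δ₁ * r₃ * α₃ ≠ 0 := by
      rw [show α₁ * p₁ * δ₃ - δ₁ * r₃ * α₃ = α₁ * p₁ * δ₃ - α₃ * r₃ * δ₁ by ring]; exact hD₃
    field_simp
    ring
  exact ⟨g1, g2, g3, g4, g5, g6⟩
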